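/- For m ≥ 1 and 0 < r₁ < ⋯ < r_m, let φ_m : ℝ → ℝ be defined by φ₁(s) = max(s, log r₁) and φ_m(s) = (1/2)φ_{m−1}(s) for s ≤ log r_m, φ_m(s) = s + (1/2)φ_{m−1}(log r_m) − log r_m for s > log r_m. Then each φ_m is convex, nondecreasing, piecewise affine with slopes in {0, 2^{-(m-1)}, 2^{-(m-2)}, …, 1/2, 1}, and the set of points where φ_m is not affine is exactly {log r₁, …, log r_m}. -/

import Mathlib

open Real Set Classical

noncomputable section

/-- `φ` is affine in a neighborhood of `s`. -/
def AffineAt (φ : ℝ → ℝ) (s : ℝ) : Prop :=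
  ∃ ε > (0:ℝ), ∃ a b : ℝ, ∀ t : ℝ, |t - s| < ε → φ t = a * t + b

/-- `φ` is affine with slope `a` in a neighborhood of `s`. -/
def AffineAtSlope (φ : ℝ → ℝ) (s a : ℝ) : Prop :=
  ∃ ε > (0:ℝ), ∃ b : ℝ, ∀ t : ℝ, |t - s| < ε → φ t = a * t + b

private lemma slope_eq_aux {a b a' b' t u : ℝ} (h1 : a*t+b = a'*t+b')
    (h2 : a*u+b = a'*u+b') (h : t ≠ u) : a = a' := by
  have h3 : (a - a') * (t - u) = 0 := by linear_combination h1 - h2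
  rcases mul_eq_zero.1 h3 with h4 | h4
  · linarith
  · exact absurd (by linarith : t = u) h

set_option maxHeartbeats 1000000 in
/-- the recursively defined logarithmic profiles
`φ₁(s) = max(s, log r₁)`, `φ_m = (1/2)φ_{m−1}` below `log r_m` and affine of slope `1`
above, are convex, nondecreasing, piecewise affine with slopes in
`{0, 2^{-(m-1)}, …, 1/2, 1}`, and fail to be locally affine exactly at
`{log r₁, …, log r_m}`. -/
theorem stmt16 (r : ℕ → ℝ) (hr1 : 0 < r 1)
    (hrmono : ∀ i j : ℕ, 1 ≤ i → i < j → r i < r j)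
    (φ : ℕ → ℝ → ℝ)
    (hφ1 : ∀ s : ℝ, φ 1 s = max s (Real.log (r 1)))
    (hφm : ∀ m : ℕ, 2 ≤ m → ∀ s : ℝ,
      φ m s = if s ≤ Real.log (r m) then (1 / 2) * φ (m - 1) s
        else s + (1 / 2) * φ (m - 1) (Real.log (r m)) - Real.log (r m)) :
    ∀ m : ℕ, 1 ≤ m →
      ConvexOn ℝ Set.univ (φ m) ∧ Monotone (φ m) ∧
        (∀ s a : ℝ, AffineAtSlope (φ m) s a →
          a = 0 ∨ ∃ k : ℕ, k ≤ m - 1 ∧ a = (2:ℝ)⁻¹ ^ k) ∧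
        (∀ s : ℝ, AffineAt (φ m) s ↔
          ¬ ∃ i : ℕ, 1 ≤ i ∧ i ≤ m ∧ s = Real.log (r i)) := by
  have hrpos : ∀ i, 1 ≤ i → 0 < r i := by
    intro i hi
    rcases eq_or_lt_of_le hi with h | h
    · rwa [← h]
    · exact lt_trans hr1 (hrmono 1 i le_rfl h)
  have hLlt : ∀ i j, 1 ≤ i → i < j → Real.log (r i) < Real.log (r j) := by
    intro i j hi hij
    exact Real.log_lt_log (hrpos i hi) (hrmono i j hi hij)
  suffices H : ∀ m, 1 ≤ m →
      ((∀ s t : ℝ, s ≤ t → φ m t - φ m s ≤ t - s) ∧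
        (∃ c : ℝ, ∀ t : ℝ, Real.log (r m) ≤ t → φ m t = t + c)) ∧
      (ConvexOn ℝ Set.univ (φ m) ∧ Monotone (φ m) ∧
        (∀ s a : ℝ, AffineAtSlope (φ m) s a →
          a = 0 ∨ ∃ k : ℕ, k ≤ m - 1 ∧ a = (2:ℝ)⁻¹ ^ k) ∧
        (∀ s : ℝ, AffineAt (φ m) s ↔
          ¬ ∃ i : ℕ, 1 ≤ i ∧ i ≤ m ∧ s = Real.log (r i))) by
    exact fun m hm => (H m hm).2
  intro m hm
  induction m, hm using Nat.le_induction with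
  | base =>
    set L : ℝ := Real.log (r 1) with hLdef
    -- basic facts for φ 1
    have hmono : Monotone (φ 1) := by
      intro a b hab
      rw [hφ1, hφ1]
      exact max_le_max hab le_rfl
    have hlip : ∀ s t : ℝ, s ≤ t → φ 1 t - φ 1 s ≤ t - s := by
      intro s t hst
      rw [hφ1, hφ1]
      have h1 := le_max_left s L
      have h2 := le_max_right s L
      have h3 : max t L ≤ max s L + (t - s) :=
        max_le (by linarith) (by linarith)
      linarith
    have hR : ∀ t : ℝ, L ≤ t → φ 1 t = t + 0 := by
      intro t ht
      rw [hφ1, max_eq_left ht]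
      ring
    refine ⟨⟨hlip, ⟨0, hR⟩⟩, ?_, hmono, ?_, ?_⟩
    · -- convexity
      have h1 : ConvexOn ℝ Set.univ (fun s : ℝ => s) := convexOn_id convex_univ
      have h2 : ConvexOn ℝ Set.univ (fun _ : ℝ => L) := convexOn_const _ convex_univ
      have h3 := h1.sup h2
      have he : φ 1 = (fun s : ℝ => s) ⊔ (fun _ : ℝ => L) := by
        funext s
        rw [hφ1]
        simp [Pi.sup_apply]
      rw [he]
      exact h3
    · -- slope characterization
      rintro s a ⟨ε, hε, b, hb⟩
      rcases lt_or_ge s L with hs | hs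
      · -- constant region : a = 0
        left
        have hεm : (0:ℝ) < min ε (L - s) := lt_min hε (by linarith)
        have h1 : φ 1 s = a * s + b := hb s (by simp [hε])
        have h2 : φ 1 (s - min ε (L - s) / 2) = a * (s - min ε (L - s) / 2) + b := by
          apply hb
          rw [show s - min ε (L - s) / 2 - s = -(min ε (L - s) / 2) by ring, abs_neg,
            abs_of_pos (by linarith)]
          have := min_le_left ε (L - s)
          linarith
      -- both points are ≤ L, so φ 1 = L there
        have hv1 : φ 1 s = L := by rw [hφ1, max_eq_right hs.le]
        have hv2 : φ 1 (s - min ε (L - s) / 2) = L := by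
          rw [hφ1]
          apply max_eq_right
          have := min_le_right ε (L - s)
          linarith
        have := slope_eq_aux (a' := 0) (b' := L)
          (by rw [← h1, hv1]; ring)
          (by rw [← h2, hv2]; ring)
          (by intro h; nlinarith)
        linarith
      · -- in region of slope 1 : a = 1
        right
        have h1 : a * (s + ε/2) + b = (s + ε/2) + 0 := by
          rw [← hb (s + ε/2) (by rw [show s + ε/2 - s = ε/2 by ring, abs_of_pos (by linarith)]; linarith)]
          rw [hR (s + ε/2) (by linarith)]
        have h2 : a * (s + ε/4) + b = (s + ε/4) + 0 := by
          rw [← hb (s + ε/4) (by rw [show s + ε/4 - s = ε/4 by ring, abs_of_pos (by linarith)]; linarith)]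
          rw [hR (s + ε/4) (by linarith)]
        have ha : a = 1 := by
          have := slope_eq_aux (a' := 1) (b' := 0)
            (by rw [h1]; ring) (by rw [h2]; ring) (by intro h; nlinarith)
          linarith
        exact ⟨0, le_rfl, by rw [pow_zero, ha]⟩
    · -- affine characterization
      intro s
      constructor
      · rintro ⟨ε, hε, a, b, hb⟩ ⟨i, hi1, hi2, hsi⟩
        have hi : i = 1 := le_antisymm hi2 hi1
        subst hi
        have hsL : s = L := hsi
        -- right side gives a = 1
        have h1 : a * (s + ε/2) + b = (s + ε/2) + 0 := by
          rw [← hb (s + ε/2) (by rw [show s + ε/2 - s = ε/2 by ring, abs_of_pos (by linarith)]; linarith)]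
          rw [hR (s + ε/2) (by linarith [hsL.ge])]
        have h2 : a * (s + ε/4) + b = (s + ε/4) + 0 := by
          rw [← hb (s + ε/4) (by rw [show s + ε/4 - s = ε/4 by ring, abs_of_pos (by linarith)]; linarith)]
          rw [hR (s + ε/4) (by linarith [hsL.ge])]
        have ha1 : a = 1 := by
          have := slope_eq_aux (a' := 1) (b' := 0)
            (by rw [h1]; ring) (by rw [h2]; ring) (by intro h; nlinarith)
          linarith
        -- left side gives a = 0
        have h3 : a * s + b = 0 * s + L := by
          rw [← hb s (by simp [hε]), hφ1, hsL, max_self, zero_mul, zero_add]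
        have h4 : a * (s - ε/2) + b = 0 * (s - ε/2) + L := by
          rw [← hb (s - ε/2) (by rw [show s - ε/2 - s = -(ε/2) by ring, abs_neg, abs_of_pos (by linarith)]; linarith)]
          rw [hφ1, max_eq_right (by rw [← hsL]; linarith), zero_mul, zero_add]
        have ha0 : a = 0 := slope_eq_aux h3 h4 (by intro h; nlinarith)
        rw [ha0] at ha1
        norm_num at ha1
      · intro hne
        have hsL : s ≠ L := fun h => hne ⟨1, le_rfl, le_rfl, h⟩
        rcases lt_or_gt_of_ne hsL with hs | hs
        · refine ⟨L - s, by linarith, 0, L, ?_⟩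
          intro t ht
          rw [abs_lt] at ht
          rw [hφ1, max_eq_right (by linarith), zero_mul, zero_add]
        · refine ⟨s - L, by linarith, 1, 0, ?_⟩
          intro t ht
          rw [abs_lt] at ht
          rw [hφ1, max_eq_left (by linarith), one_mul, add_zero]
  | succ n hn IH =>
    obtain ⟨⟨hlip, cR, hcR⟩, hconv, hmono, hslope, haff⟩ := IH
    have h2 : 2 ≤ n + 1 := by omega
    set L : ℝ := Real.log (r (n+1)) with hLdef
    set c : ℝ := (1/2) * φ n L - L with hcdef
    have hform : ∀ s : ℝ, φ (n+1) s =
        if s ≤ L then (1/2) * φ n s else s + (1/2) * φ n L - L := by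
      intro s
      have := hφm (n+1) h2 s
      simpa [Nat.add_sub_cancel] using this
    have hrep : ∀ s : ℝ, φ (n+1) s = max ((1/2) * φ n s) (s + c) := by
      intro s
      rw [hform s]
      split_ifs with h
      · rw [max_eq_left ?_]
        have ha := hlip s L h
        rw [hcdef]
        linarith
      · push_neg at h
        rw [max_eq_right ?_]
        · rw [hcdef]; ring
        · have ha := hlip L s h.le
          have hb := hmono h.le
          rw [hcdef]
          linarith
    have hmono' : Monotone (φ (n+1)) := by
      intro a b hab
      rw [hrep, hrep]
      have := hmono hab
      exact max_le_max (by linarith) (by linarith)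
    have hlip' : ∀ s t : ℝ, s ≤ t → φ (n+1) t - φ (n+1) s ≤ t - s := by
      intro s t hst
      rw [hrep, hrep]
      have h1 := hlip s t hst
      have h2 := le_max_left ((1/2) * φ n s) (s + c)
      have h3 := le_max_right ((1/2) * φ n s) (s + c)
      have h4 : max ((1/2) * φ n t) (t + c) ≤ max ((1/2) * φ n s) (s + c) + (t - s) :=
        max_le (by linarith) (by linarith)
      linarith
    have hR : ∀ t : ℝ, L ≤ t → φ (n+1) t = t + c := by
      intro t ht
      rw [hrep, max_eq_right ?_]
      have ha := hlip L t ht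
      have hb := hmono ht
      rw [hcdef]
      linarith
    refine ⟨⟨hlip', ⟨c, hR⟩⟩, ?_, hmono', ?_, ?_⟩
    · -- convexity
      have c1 : ConvexOn ℝ Set.univ (fun s : ℝ => (1/2) * φ n s) := by
        simpa [smul_eq_mul] using hconv.smul (by norm_num : (0:ℝ) ≤ 1/2)
      have c2 : ConvexOn ℝ Set.univ (fun s : ℝ => s + c) :=
        (convexOn_id convex_univ).add (convexOn_const c convex_univ)
      have c3 := c1.sup c2
      have he : φ (n+1) = (fun s : ℝ => (1/2) * φ n s) ⊔ (fun s : ℝ => s + c) := by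
        funext s
        rw [hrep]
        simp [Pi.sup_apply]
      rw [he]
      exact c3
    · -- slope characterization
      rintro s a ⟨ε, hε, b, hb⟩
      rcases lt_or_ge s L with hs | hs
      · -- transfer to φ n with slope 2a
        have hsl : AffineAtSlope (φ n) s (2*a) := by
          refine ⟨min ε (L - s), lt_min hε (by linarith), 2*b, ?_⟩
          intro t ht
          have ht1 : |t - s| < ε := lt_of_lt_of_le ht (min_le_left _ _)
          have ht2 : t ≤ L := by
            have := lt_of_lt_of_le ht (min_le_right _ _)
            rw [abs_lt] at this
            linarith
          have hv := hb t ht1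
          rw [hform t, if_pos ht2] at hv
          linarith
        rcases hslope s (2*a) hsl with h0 | ⟨k, hk, hak⟩
        · left; linarith
        · right
          refine ⟨k + 1, by omega, ?_⟩
          rw [pow_succ, ← hak]
          ring
      · -- slope 1 region
        right
        have h1 : a * (s + ε/2) + b = 1 * (s + ε/2) + c := by
          rw [← hb (s + ε/2) (by rw [show s + ε/2 - s = ε/2 by ring, abs_of_pos (by linarith)]; linarith)]
          rw [hR (s + ε/2) (by linarith)]
          ring
        have h2 : a * (s + ε/4) + b = 1 * (s + ε/4) + c := by
          rw [← hb (s + ε/4) (by rw [show s + ε/4 - s = ε/4 by ring, abs_of_pos (by linarith)]; linarith)]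
          rw [hR (s + ε/4) (by linarith)]
          ring
        have ha : a = 1 := slope_eq_aux h1 h2 (by intro h; nlinarith)
        exact ⟨0, by omega, by rw [pow_zero, ha]⟩
    · -- affine characterization
      intro s
      constructor
      · rintro ⟨ε, hε, a, b, hb⟩ ⟨i, hi1, hi2, hsi⟩
        rcases eq_or_lt_of_le hi2 with hi | hi
        · -- i = n+1 : kink at L
          have hsL : s = L := by rw [hsi, hi]
          -- right side gives a = 1
          have h1 : a * (s + ε/2) + b = 1 * (s + ε/2) + c := by
            rw [← hb (s + ε/2) (by rw [show s + ε/2 - s = ε/2 by ring, abs_of_pos (by linarith)]; linarith)]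
            rw [hR (s + ε/2) (by rw [← hsL]; linarith)]
            ring
          have h2 : a * (s + ε/4) + b = 1 * (s + ε/4) + c := by
            rw [← hb (s + ε/4) (by rw [show s + ε/4 - s = ε/4 by ring, abs_of_pos (by linarith)]; linarith)]
            rw [hR (s + ε/4) (by rw [← hsL]; linarith)]
            ring
          have ha1 : a = 1 := slope_eq_aux h1 h2 (by intro h; nlinarith)
          -- left side has slope at most 1/2
          have hv1 : a * s + b = (1/2) * φ n s := by
            rw [← hb s (by simp [hε]), hform s, if_pos hsL.le]
          have hv2 : a * (s - ε/2) + b = (1/2) * φ n (s - ε/2) := by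
            rw [← hb (s - ε/2) (by rw [show s - ε/2 - s = -(ε/2) by ring, abs_neg, abs_of_pos (by linarith)]; linarith)]
            rw [hform _, if_pos (by rw [← hsL]; linarith)]
          have hl := hlip (s - ε/2) s (by linarith)
          rw [ha1] at hv1 hv2
          linarith
        · -- i ≤ n : transfer to φ n
          have hin : i ≤ n := by omega
          have hsLlt : s < L := by
            rw [hsi, hLdef]
            exact hLlt i (n+1) hi1 (by omega)
          have haffn : AffineAt (φ n) s := by
            refine ⟨min ε (L - s), lt_min hε (by linarith), 2*a, 2*b, ?_⟩
            intro t ht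
            have ht1 : |t - s| < ε := lt_of_lt_of_le ht (min_le_left _ _)
            have ht2 : t ≤ L := by
              have := lt_of_lt_of_le ht (min_le_right _ _)
              rw [abs_lt] at this
              linarith
            have hv := hb t ht1
            rw [hform t, if_pos ht2] at hv
            linarith
          exact (haff s).1 haffn ⟨i, hi1, hin, hsi⟩
      · intro hne
        have hsL : s ≠ L := fun h => hne ⟨n+1, by omega, le_rfl, by rw [h]⟩
        rcases lt_or_gt_of_ne hsL with hs | hs
        · -- below L : use φ n
          have haffn : AffineAt (φ n) s := by
            apply (haff s).2
            rintro ⟨i, hi1, hi2, hsi⟩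
            exact hne ⟨i, hi1, by omega, hsi⟩
          obtain ⟨ε, hε, a, b, hb⟩ := haffn
          refine ⟨min ε (L - s), lt_min hε (by linarith), a/2, b/2, ?_⟩
          intro t ht
          have ht1 : |t - s| < ε := lt_of_lt_of_le ht (min_le_left _ _)
          have ht2 : t ≤ L := by
            have := lt_of_lt_of_le ht (min_le_right _ _)
            rw [abs_lt] at this
            linarith
          rw [hform t, if_pos ht2, hb t ht1]
          ring
        · -- above L : slope 1
          refine ⟨s - L, by linarith, 1, c, ?_⟩
          intro t ht
          rw [abs_lt] at ht
          rw [hR t (by linarith), one_mul]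

end
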